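/- The rationals ℚ with zero-totalized inverse and the standard sign function (sign(x) = -1 if x < 0, 0 if x = 0, 1 if x > 0) satisfy all the axioms of signed meadows, including the axiom (1 - (s(x)-s(y))·(s(x)-s(y))⁻¹)·(s(x+y) - s(x)) = 0. -/

import Mathlib

theorem rat_signed_meadow (s : ℚ → ℚ) (hs : s = fun x => (SignType.sign x : ℚ)) :
    (∀ x : ℚ, x⁻¹⁻¹ = x) ∧ (∀ x : ℚ, x * (x * x⁻¹) = x) ∧
    (∀ x : ℚ, s (x * x⁻¹) = x * x⁻¹) ∧
    (∀ x : ℚ, s (1 - x * x⁻¹) = 1 - x * x⁻¹) ∧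
    (s (-1) = -1) ∧
    (∀ x : ℚ, s x⁻¹ = s x) ∧
    (∀ x y : ℚ, s (x * y) = s x * s y) ∧
    (∀ x y : ℚ, (1 - (s x - s y) * (s x - s y)⁻¹) * (s (x + y) - s x) = 0) := by
  subst hs
  refine ⟨fun x => inv_inv x, ?_, ?_, ?_, ?_, ?_, ?_, ?_⟩
  · intro x
    rcases eq_or_ne x 0 with h | h
    · simp [h]
    · field_simp
  · intro x
    rcases eq_or_ne x 0 with h | h <;> simp [h]
  · intro x
    rcases eq_or_ne x 0 with h | h <;> simp [h]
  · simp
  · intro x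
    rcases lt_trichotomy x 0 with h | h | h
    · simp [sign_neg h, sign_neg (inv_neg''.2 h)]
    · simp [h]
    · simp [sign_pos h, sign_pos (inv_pos.2 h)]
  · intro x y
    simp [sign_mul]
  · intro x y
    simp only
    rcases eq_or_ne ((SignType.sign x : ℚ) - (SignType.sign y : ℚ)) 0 with h | h
    · have hxy : SignType.sign x = SignType.sign y := by
        have h' : (SignType.sign x : ℚ) = (SignType.sign y : ℚ) := by linarith [h]
        cases hx : SignType.sign x <;> cases hy : SignType.sign y <;>
          rw [hx, hy] at h' <;> first | rfl | (norm_num at h')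
      rcases lt_trichotomy x 0 with hx | hx | hx
      · have hy : y < 0 := by
          by_contra hy
          push_neg at hy
          rcases hy.lt_or_eq with hy' | hy'
          · rw [sign_pos hy', sign_neg hx] at hxy; exact absurd hxy (by decide)
          · rw [← hy', sign_zero, sign_neg hx] at hxy; exact absurd hxy (by decide)
        have : x + y < 0 := by linarith
        simp [sign_neg hx, sign_neg this]
      · have hy : y = 0 := by
          rw [hx, sign_zero] at hxy
          exact sign_eq_zero_iff.mp hxy.symm
        simp [hx, hy]
      · have hy : 0 < y := by
          by_contra hy
          push_neg at hy
          rcases hy.lt_or_eq with hy' | hy'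
          · rw [sign_neg hy', sign_pos hx] at hxy; exact absurd hxy (by decide)
          · rw [hy', sign_zero, sign_pos hx] at hxy; exact absurd hxy (by decide)
        have : 0 < x + y := by linarith
        simp [sign_pos hx, sign_pos this]
    · field_simp
      simp
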